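/- Let b : Ω ⊆ ℝ⁴ → 𝕋 be a bicomplex function such that b_ω is ℂ(i₁)-valued, and let W = u + i₂v : Ω → 𝕋 (with u, v ℂ(i₁)-valued and sufficiently smooth) be a solution of the equation W_{ω†₂} = b·W†₂ on Ω. Then u : Ω → ℂ(i₁) satisfies ∂_{ω†₂}∂_ω u − (|b|²_{i₁} + b_ω)u = 0 on Ω, and v : Ω → ℂ(i₁) satisfies ∂_{ω†₂}∂_ω v − (|b|²_{i₁} − b_ω)v = 0 on Ω. -/

import Mathlib

noncomputable section

open Complex Filter Topology

/-- The bicomplex numbers `𝕋 = {z₁ + z₂ i₂ : z₁, z₂ ∈ ℂ(i₁)}`, represented by the pair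
of `ℂ(i₁)`-components `(z₁, z₂)`. -/
@[ext] structure Bicomplex : Type where
  z1 : ℂ
  z2 : ℂ

namespace Bicomplex

instance : Zero Bicomplex := ⟨⟨0, 0⟩⟩
instance : One Bicomplex := ⟨⟨1, 0⟩⟩
instance : Add Bicomplex := ⟨fun w v => ⟨w.z1 + v.z1, w.z2 + v.z2⟩⟩
instance : Neg Bicomplex := ⟨fun w => ⟨-w.z1, -w.z2⟩⟩
instance : Mul Bicomplex := ⟨fun w v => ⟨w.z1 * v.z1 - w.z2 * v.z2, w.z1 * v.z2 + w.z2 * v.z1⟩⟩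

@[simp] lemma zero_z1 : (0 : Bicomplex).z1 = 0 := rfl
@[simp] lemma zero_z2 : (0 : Bicomplex).z2 = 0 := rfl
@[simp] lemma one_z1 : (1 : Bicomplex).z1 = 1 := rfl
@[simp] lemma one_z2 : (1 : Bicomplex).z2 = 0 := rfl
@[simp] lemma add_z1 (w v : Bicomplex) : (w + v).z1 = w.z1 + v.z1 := rfl
@[simp] lemma add_z2 (w v : Bicomplex) : (w + v).z2 = w.z2 + v.z2 := rfl
@[simp] lemma neg_z1 (w : Bicomplex) : (-w).z1 = -w.z1 := rfl
@[simp] lemma neg_z2 (w : Bicomplex) : (-w).z2 = -w.z2 := rfl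
@[simp] lemma mul_z1 (w v : Bicomplex) : (w * v).z1 = w.z1 * v.z1 - w.z2 * v.z2 := rfl
@[simp] lemma mul_z2 (w v : Bicomplex) : (w * v).z2 = w.z1 * v.z2 + w.z2 * v.z1 := rfl

/-- The bicomplex numbers form a commutative ring. -/
instance : CommRing Bicomplex where
  nsmul n w := ⟨n • w.z1, n • w.z2⟩
  zsmul n w := ⟨n • w.z1, n • w.z2⟩
  nsmul_zero a := by ext <;> exact zero_smul ℕ _
  nsmul_succ n a := by ext <;> exact succ_nsmul _ n
  zsmul_zero' a := by ext <;> exact zero_smul ℤ _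
  zsmul_succ' n a := by ext <;> (show ((n.succ : ℕ) : ℤ) • _ = (n : ℤ) • _ + _; simp; ring)
  zsmul_neg' n a := by ext <;> (show (Int.negSucc n) • _ = -(((n.succ : ℕ) : ℤ) • _); simp [add_zsmul]; ring)
  add_assoc a b c := by ext <;> simp <;> ring
  zero_add a := by ext <;> simp
  add_zero a := by ext <;> simp
  add_comm a b := by ext <;> simp <;> ring
  neg_add_cancel a := by ext <;> simp
  mul_assoc a b c := by ext <;> simp <;> ring
  one_mul a := by ext <;> simp
  mul_one a := by ext <;> simp
  left_distrib a b c := by ext <;> simp <;> ring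
  right_distrib a b c := by ext <;> simp <;> ring
  zero_mul a := by ext <;> simp
  mul_zero a := by ext <;> simp
  mul_comm a b := by ext <;> simp <;> ring

/-- Inverse: `w⁻¹ = w†₂ / (z₁² + z₂²)` (junk value `0/0` on the null-cone). -/
instance : Inv Bicomplex :=
  ⟨fun w => ⟨w.z1 / (w.z1 ^ 2 + w.z2 ^ 2), -w.z2 / (w.z1 ^ 2 + w.z2 ^ 2)⟩⟩

instance : Div Bicomplex := ⟨fun w v => w * v⁻¹⟩

/-- Embedding of `ℂ(i₁)` into `𝕋`. -/
def ofComplex (c : ℂ) : Bicomplex := ⟨c, 0⟩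

/-- Embedding of `ℝ` into `𝕋`. -/
def ofReal (t : ℝ) : Bicomplex := ⟨(t : ℂ), 0⟩

/-- The imaginary unit `i₁`. -/
def i1 : Bicomplex := ⟨Complex.I, 0⟩

/-- The imaginary unit `i₂`. -/
def i2 : Bicomplex := ⟨0, 1⟩

/-- The hyperbolic unit `j = i₁ i₂`. -/
def jj : Bicomplex := ⟨0, Complex.I⟩

/-- The idempotent `e₁ = (1 + j)/2`. -/
def e1 : Bicomplex := ⟨1 / 2, Complex.I / 2⟩

/-- The idempotent `e₂ = (1 - j)/2`. -/
def e2 : Bicomplex := ⟨1 / 2, -(Complex.I) / 2⟩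

/-- The projection `P₁(z₁ + z₂ i₂) = z₁ - z₂ i₁`. -/
def P1 (w : Bicomplex) : ℂ := w.z1 - w.z2 * Complex.I

/-- The projection `P₂(z₁ + z₂ i₂) = z₁ + z₂ i₁`. -/
def P2 (w : Bicomplex) : ℂ := w.z1 + w.z2 * Complex.I

/-- The conjugation `w†₁ = z̄₁ + z̄₂ i₂`. -/
def dag1 (w : Bicomplex) : Bicomplex := ⟨(starRingEnd ℂ) w.z1, (starRingEnd ℂ) w.z2⟩

/-- The conjugation `w†₂ = z₁ - z₂ i₂`. -/
def dag2 (w : Bicomplex) : Bicomplex := ⟨w.z1, -w.z2⟩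

/-- The conjugation `w†₃ = z̄₁ - z̄₂ i₂`. -/
def dag3 (w : Bicomplex) : Bicomplex := ⟨(starRingEnd ℂ) w.z1, -((starRingEnd ℂ) w.z2)⟩

/-- `𝕋` as `ℂ × ℂ`. -/
def toProd (w : Bicomplex) : ℂ × ℂ := (w.z1, w.z2)

/-- `ℂ × ℂ` as `𝕋`. -/
def ofProd (p : ℂ × ℂ) : Bicomplex := ⟨p.1, p.2⟩

instance : TopologicalSpace Bicomplex := TopologicalSpace.induced toProd inferInstance

/-- The set of points `w` such that `w - w₀` is invertible (i.e. not a zero divisor). -/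
def invertibleDiff (w₀ : Bicomplex) : Set Bicomplex :=
  {w | (w - w₀).z1 ^ 2 + (w - w₀).z2 ^ 2 ≠ 0}

/-- `f` is `𝕋`-differentiable at `w₀` with derivative `d`:
`(f w - f w₀)/(w - w₀) → d` as `w → w₀` with `w - w₀` invertible. -/
def HasTDerivAt (f : Bicomplex → Bicomplex) (d w₀ : Bicomplex) : Prop :=
  Tendsto (fun w => (f w - f w₀) / (w - w₀)) (𝓝[invertibleDiff w₀] w₀) (𝓝 d)

/-- `f` is `𝕋`-holomorphic on `U` if it is `𝕋`-differentiable at each point of `U`. -/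
def THolomorphicOn (f : Bicomplex → Bicomplex) (U : Set Bicomplex) : Prop :=
  ∀ w ∈ U, ∃ d, HasTDerivAt f d w

/-- `f` viewed as a map `ℂ² → ℂ²`. -/
def fProd (f : Bicomplex → Bicomplex) : ℂ × ℂ → ℂ × ℂ := fun p => toProd (f (ofProd p))

/-- `f : 𝕋 → 𝕋` is `n` times continuously (real-)differentiable on `U`. -/
def TContDiffOn (n : ℕ∞) (f : Bicomplex → Bicomplex) (U : Set Bicomplex) : Prop :=
  ContDiffOn ℝ n (fProd f) (toProd '' U)

/-- `g : 𝕋 → ℂ` is `n` times continuously (real-)differentiable on `U`. -/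
def CContDiffOn (n : ℕ∞) (g : Bicomplex → ℂ) (U : Set Bicomplex) : Prop :=
  ContDiffOn ℝ n (fun p => g (ofProd p)) (toProd '' U)

/-- Real partial derivative of `g : 𝕋 → ℂ` at `w` in direction `e`. -/
def pd (e : Bicomplex) (g : Bicomplex → ℂ) (w : Bicomplex) : ℂ :=
  deriv (fun t : ℝ => g (w + ofReal t * e)) 0

/-- Existence of the real partial derivative of `g : 𝕋 → ℂ` at `w` in direction `e`. -/
def pdExists (e : Bicomplex) (g : Bicomplex → ℂ) (w : Bicomplex) : Prop :=
  DifferentiableAt ℝ (fun t : ℝ => g (w + ofReal t * e)) 0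

/-- The scalar (`ℂ(i₁)`-) component `f₁` of `f = f₁ + f₂ i₂`. -/
def s1 (f : Bicomplex → Bicomplex) : Bicomplex → ℂ := fun w => (f w).z1

/-- The vectorial (`ℂ(i₁)`-) component `f₂` of `f = f₁ + f₂ i₂`. -/
def s2 (f : Bicomplex → Bicomplex) : Bicomplex → ℂ := fun w => (f w).z2

/-- Real partial derivative of `f : 𝕋 → 𝕋` in direction `e`. -/
def pdT (e : Bicomplex) (f : Bicomplex → Bicomplex) : Bicomplex → Bicomplex :=
  fun w => ⟨pd e (s1 f) w, pd e (s2 f) w⟩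

/-- Existence of the real partial derivative of `f : 𝕋 → 𝕋` in direction `e`. -/
def pdTExists (e : Bicomplex) (f : Bicomplex → Bicomplex) (w : Bicomplex) : Prop :=
  pdExists e (s1 f) w ∧ pdExists e (s2 f) w

/-- `∂_{z₁} g = ½(∂ₓ g - i₁ ∂_y g)` for `g : 𝕋 → ℂ`. -/
def dz1 (g : Bicomplex → ℂ) : Bicomplex → ℂ :=
  fun w => (pd 1 g w - Complex.I * pd i1 g w) / 2

/-- `∂_{z̄₁} g = ½(∂ₓ g + i₁ ∂_y g)` for `g : 𝕋 → ℂ`. -/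
def dz1bar (g : Bicomplex → ℂ) : Bicomplex → ℂ :=
  fun w => (pd 1 g w + Complex.I * pd i1 g w) / 2

/-- `∂_{z₂} g = ½(∂_p g - i₁ ∂_q g)` for `g : 𝕋 → ℂ`. -/
def dz2 (g : Bicomplex → ℂ) : Bicomplex → ℂ :=
  fun w => (pd i2 g w - Complex.I * pd jj g w) / 2

/-- `∂_{z̄₂} g = ½(∂_p g + i₁ ∂_q g)` for `g : 𝕋 → ℂ`. -/
def dz2bar (g : Bicomplex → ℂ) : Bicomplex → ℂ :=
  fun w => (pd i2 g w + Complex.I * pd jj g w) / 2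

/-- `∂_{z₁}` applied componentwise to `f : 𝕋 → 𝕋`. -/
def dZ1 (f : Bicomplex → Bicomplex) : Bicomplex → Bicomplex :=
  fun w => ⟨dz1 (s1 f) w, dz1 (s2 f) w⟩

/-- `∂_{z₂}` applied componentwise to `f : 𝕋 → 𝕋`. -/
def dZ2 (f : Bicomplex → Bicomplex) : Bicomplex → Bicomplex :=
  fun w => ⟨dz2 (s1 f) w, dz2 (s2 f) w⟩

/-- `∂_{z̄₁}` applied componentwise to `f : 𝕋 → 𝕋`. -/
def dZ1bar (f : Bicomplex → Bicomplex) : Bicomplex → Bicomplex :=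
  fun w => ⟨dz1bar (s1 f) w, dz1bar (s2 f) w⟩

/-- `∂_{z̄₂}` applied componentwise to `f : 𝕋 → 𝕋`. -/
def dZ2bar (f : Bicomplex → Bicomplex) : Bicomplex → Bicomplex :=
  fun w => ⟨dz2bar (s1 f) w, dz2bar (s2 f) w⟩

/-- `∂_ω = ½(∂_{z₁} - i₂ ∂_{z₂})`. -/
def dOm (f : Bicomplex → Bicomplex) : Bicomplex → Bicomplex :=
  fun w => ofComplex (1 / 2) * (dZ1 f w - i2 * dZ2 f w)

/-- `∂_{ω†₂} = ∂_ω̄ = ½(∂_{z₁} + i₂ ∂_{z₂})`. -/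
def dOmBar (f : Bicomplex → Bicomplex) : Bicomplex → Bicomplex :=
  fun w => ofComplex (1 / 2) * (dZ1 f w + i2 * dZ2 f w)

/-- `∂_{ω†₁} = ½(∂_{z̄₁} - i₂ ∂_{z̄₂})`. -/
def dOmDag1 (f : Bicomplex → Bicomplex) : Bicomplex → Bicomplex :=
  fun w => ofComplex (1 / 2) * (dZ1bar f w - i2 * dZ2bar f w)

/-- `∂_{ω†₃} = ½(∂_{z̄₁} + i₂ ∂_{z̄₂})`. -/
def dOmDag3 (f : Bicomplex → Bicomplex) : Bicomplex → Bicomplex :=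
  fun w => ofComplex (1 / 2) * (dZ1bar f w + i2 * dZ2bar f w)

/-- The complexified Laplacian `Δ_ℂ = ∂²_{z₁} + ∂²_{z₂}` acting on `ℂ(i₁)`-valued functions. -/
def lapC (g : Bicomplex → ℂ) : Bicomplex → ℂ :=
  fun w => dz1 (dz1 g) w + dz2 (dz2 g) w

/-- The vector part in the `i₂`-representation `w = ζ₁ + ζ₂ i₁` with `ζ₁, ζ₂ ∈ ℂ(i₂)`:
for `w = x₁ + x₂i₁ + x₃i₂ + x₄j`, `Vec(w) = x₂ + x₄ i₂`, encoded as the complex number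
`x₂ + x₄ i`. -/
def vec2 (w : Bicomplex) : ℂ := ⟨w.z1.im, w.z2.im⟩

/-- Embedding of `ℂ(i₂)` into `𝕋`: the complex number `a + b i` represents `a + b i₂`. -/
def ofC2 (c : ℂ) : Bicomplex := ⟨(c.re : ℂ), (c.im : ℂ)⟩

/-- Multiplication of hyperbolic numbers `ℂ(j) = {x + yj}`, encoded as pairs in `ℝ × ℝ`. -/
def hmul (a b : ℝ × ℝ) : ℝ × ℝ := (a.1 * b.1 + a.2 * b.2, a.1 * b.2 + a.2 * b.1)

/-- Division of hyperbolic numbers (junk value when the denominator is a zero divisor). -/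
def hdiv (a b : ℝ × ℝ) : ℝ × ℝ :=
  hmul a (b.1 / (b.1 ^ 2 - b.2 ^ 2), -b.2 / (b.1 ^ 2 - b.2 ^ 2))

/-- Embedding of the hyperbolic numbers `ℂ(j)` into `𝕋`: `(x, y) ↦ x + y j`. -/
def ofHyp (a : ℝ × ℝ) : Bicomplex := ⟨(a.1 : ℂ), (a.2 : ℂ) * Complex.I⟩

/-- The vector part in the `j`-representation `w = ζ₁ + ζ₂ i₁` with `ζ₁, ζ₂ ∈ ℂ(j)`:
for `w = x₁ + x₂i₁ + x₃i₂ + x₄j`, `Vec(w) = x₂ - x₃ j`, encoded as the pair `(x₂, -x₃)`. -/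
def vec3 (w : Bicomplex) : ℝ × ℝ := (w.z1.im, -w.z2.re)

/-- The `𝕋`-cartesian set `X₁ ×ₑ X₂ = {w : P₁ w ∈ X₁ ∧ P₂ w ∈ X₂}`. -/
def eProd (X₁ X₂ : Set ℂ) : Set Bicomplex := {w | P1 w ∈ X₁ ∧ P2 w ∈ X₂}

/-- `(F, G)` is an `i₁`-generating pair on `D`. -/
def GenPair1 (F G : Bicomplex → Bicomplex) (D : Set Bicomplex) : Prop :=
  TContDiffOn 2 F D ∧ TContDiffOn 2 G D ∧ ∀ w ∈ D, (dag2 (F w) * G w).z2 ≠ 0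

/-- `(F, G)` is an `i₂`-generating pair on `D`. -/
def GenPair2 (F G : Bicomplex → Bicomplex) (D : Set Bicomplex) : Prop :=
  TContDiffOn 2 F D ∧ TContDiffOn 2 G D ∧ ∀ w ∈ D, vec2 (dag1 (F w) * G w) ≠ 0

/-- `(F, G)` is a `j`-generating pair on `D`. -/
def GenPairJ (F G : Bicomplex → Bicomplex) (D : Set Bicomplex) : Prop :=
  TContDiffOn 2 F D ∧ TContDiffOn 2 G D ∧ ∀ w ∈ D, vec3 (dag3 (F w) * G w) ≠ 0

/-- The unique `λ₀ ∈ ℂ(i₁)` with `w(ω₀) = λ₀ F(ω₀) + μ₀ G(ω₀)`. -/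
def lam1 (F G wf : Bicomplex → Bicomplex) (ω₀ : Bicomplex) : ℂ :=
  (dag2 (wf ω₀) * G ω₀).z2 / (dag2 (F ω₀) * G ω₀).z2

/-- The unique `μ₀ ∈ ℂ(i₁)` with `w(ω₀) = λ₀ F(ω₀) + μ₀ G(ω₀)`. -/
def mu1 (F G wf : Bicomplex → Bicomplex) (ω₀ : Bicomplex) : ℂ :=
  -((dag2 (wf ω₀) * F ω₀).z2 / (dag2 (F ω₀) * G ω₀).z2)

/-- `w` has `(F,G)_{i₁}`-derivative `d` at `ω₀`. -/
def HasFGDeriv1 (F G wf : Bicomplex → Bicomplex) (d ω₀ : Bicomplex) : Prop :=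
  Tendsto
    (fun ω => (wf ω - ofComplex (lam1 F G wf ω₀) * F ω - ofComplex (mu1 F G wf ω₀) * G ω)
        / (ω - ω₀))
    (𝓝[invertibleDiff ω₀] ω₀) (𝓝 d)

/-- The unique `λ₀ ∈ ℂ(j)` with `w(ω₀) = λ₀ F(ω₀) + μ₀ G(ω₀)`. -/
def lamJ (F G wf : Bicomplex → Bicomplex) (ω₀ : Bicomplex) : ℝ × ℝ :=
  hdiv (vec3 (dag3 (wf ω₀) * G ω₀)) (vec3 (dag3 (F ω₀) * G ω₀))

/-- The unique `μ₀ ∈ ℂ(j)` with `w(ω₀) = λ₀ F(ω₀) + μ₀ G(ω₀)`. -/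
def muJ (F G wf : Bicomplex → Bicomplex) (ω₀ : Bicomplex) : ℝ × ℝ :=
  -(hdiv (vec3 (dag3 (wf ω₀) * F ω₀)) (vec3 (dag3 (F ω₀) * G ω₀)))

/-- `w` has `(F,G)_j`-derivative `d` at `ω₀`. -/
def HasFGDerivJ (F G wf : Bicomplex → Bicomplex) (d ω₀ : Bicomplex) : Prop :=
  Tendsto
    (fun ω => (wf ω - ofHyp (lamJ F G wf ω₀) * F ω - ofHyp (muJ F G wf ω₀) * G ω) / (ω - ω₀))
    (𝓝[invertibleDiff ω₀] ω₀) (𝓝 d)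

/-- `w` is `(F,G)_j`-pseudoanalytic on `D`. -/
def PseudoanalyticJ (F G wf : Bicomplex → Bicomplex) (D : Set Bicomplex) : Prop :=
  ∀ ω ∈ D, ∃ d, HasFGDerivJ F G wf d ω

/-- `w` has continuous partial derivatives in a neighborhood of `ω₀`. -/
def HasContPartialsNear (f : Bicomplex → Bicomplex) (w₀ : Bicomplex) : Prop :=
  ∃ V ∈ 𝓝 w₀, ∀ e ∈ ({1, i1, i2, jj} : Set Bicomplex),
    (∀ w ∈ V, pdTExists e f w) ∧ ContinuousOn (pdT e f) V

/-! Characteristic coefficients with respect to the `†₂` conjugation (`i₁` case). -/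

def denom2 (F G : Bicomplex → Bicomplex) (w : Bicomplex) : Bicomplex :=
  F w * dag2 (G w) - dag2 (F w) * G w

def aCoef2₁ (F G : Bicomplex → Bicomplex) (w : Bicomplex) : Bicomplex :=
  -((dag1 (F w) * dOmDag1 G w - dOmDag1 F w * dag1 (G w)) / denom2 F G w)

def bCoef2₁ (F G : Bicomplex → Bicomplex) (w : Bicomplex) : Bicomplex :=
  (F w * dOmDag1 G w - dOmDag1 F w * G w) / denom2 F G w

def aCoef2₂ (F G : Bicomplex → Bicomplex) (w : Bicomplex) : Bicomplex :=
  -((dag2 (F w) * dOmBar G w - dOmBar F w * dag2 (G w)) / denom2 F G w)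

def bCoef2₂ (F G : Bicomplex → Bicomplex) (w : Bicomplex) : Bicomplex :=
  (F w * dOmBar G w - dOmBar F w * G w) / denom2 F G w

def aCoef2₃ (F G : Bicomplex → Bicomplex) (w : Bicomplex) : Bicomplex :=
  -((dag3 (F w) * dOmDag3 G w - dOmDag3 F w * dag3 (G w)) / denom2 F G w)

def bCoef2₃ (F G : Bicomplex → Bicomplex) (w : Bicomplex) : Bicomplex :=
  (F w * dOmDag3 G w - dOmDag3 F w * G w) / denom2 F G w

def Acoef2 (F G : Bicomplex → Bicomplex) (w : Bicomplex) : Bicomplex :=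
  -((dag2 (F w) * dOm G w - dOm F w * dag2 (G w)) / denom2 F G w)

def Bcoef2 (F G : Bicomplex → Bicomplex) (w : Bicomplex) : Bicomplex :=
  (F w * dOm G w - dOm F w * G w) / denom2 F G w

/-! Characteristic coefficients with respect to the `†₃` conjugation (`j` case). -/

def denom3 (F G : Bicomplex → Bicomplex) (w : Bicomplex) : Bicomplex :=
  F w * dag3 (G w) - dag3 (F w) * G w

def aCoef3₁ (F G : Bicomplex → Bicomplex) (w : Bicomplex) : Bicomplex :=
  -((dag1 (F w) * dOmDag1 G w - dOmDag1 F w * dag1 (G w)) / denom3 F G w)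

def bCoef3₁ (F G : Bicomplex → Bicomplex) (w : Bicomplex) : Bicomplex :=
  (F w * dOmDag1 G w - dOmDag1 F w * G w) / denom3 F G w

def aCoef3₂ (F G : Bicomplex → Bicomplex) (w : Bicomplex) : Bicomplex :=
  -((dag2 (F w) * dOmBar G w - dOmBar F w * dag2 (G w)) / denom3 F G w)

def bCoef3₂ (F G : Bicomplex → Bicomplex) (w : Bicomplex) : Bicomplex :=
  (F w * dOmBar G w - dOmBar F w * G w) / denom3 F G w

def aCoef3₃ (F G : Bicomplex → Bicomplex) (w : Bicomplex) : Bicomplex :=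
  -((dag3 (F w) * dOmDag3 G w - dOmDag3 F w * dag3 (G w)) / denom3 F G w)

def bCoef3₃ (F G : Bicomplex → Bicomplex) (w : Bicomplex) : Bicomplex :=
  (F w * dOmDag3 G w - dOmDag3 F w * G w) / denom3 F G w

def Acoef3 (F G : Bicomplex → Bicomplex) (w : Bicomplex) : Bicomplex :=
  -((dag3 (F w) * dOm G w - dOm F w * dag3 (G w)) / denom3 F G w)

def Bcoef3 (F G : Bicomplex → Bicomplex) (w : Bicomplex) : Bicomplex :=
  (F w * dOm G w - dOm F w * G w) / denom3 F G w

/-! Classical (Bers) pseudoanalytic function theory in `ℂ(i₁)`. -/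

/-- A complex (in `i₁`) generating pair on `D ⊆ ℂ(i₁)`. -/
def ComplexGenPair (Fe Ge : ℂ → ℂ) (D : Set ℂ) : Prop :=
  ContDiffOn ℝ 2 Fe D ∧ ContDiffOn ℝ 2 Ge D ∧
    ∀ z ∈ D, ((starRingEnd ℂ) (Fe z) * Ge z).im ≠ 0

/-- The unique real `λ₀` with `w(z₀) = λ₀ F(z₀) + μ₀ G(z₀)`. -/
def lamBers (Fe Ge we : ℂ → ℂ) (z₀ : ℂ) : ℝ :=
  ((starRingEnd ℂ) (we z₀) * Ge z₀).im / ((starRingEnd ℂ) (Fe z₀) * Ge z₀).im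

/-- The unique real `μ₀` with `w(z₀) = λ₀ F(z₀) + μ₀ G(z₀)`. -/
def muBers (Fe Ge we : ℂ → ℂ) (z₀ : ℂ) : ℝ :=
  -(((starRingEnd ℂ) (we z₀) * Fe z₀).im / ((starRingEnd ℂ) (Fe z₀) * Ge z₀).im)

/-- `w_e` has Bers `(F_e,G_e)`-derivative `d` at `z₀`. -/
def HasBersDerivAt (Fe Ge we : ℂ → ℂ) (d z₀ : ℂ) : Prop :=
  Tendsto
    (fun z => (we z - (lamBers Fe Ge we z₀ : ℂ) * Fe z - (muBers Fe Ge we z₀ : ℂ) * Ge z)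
        / (z - z₀))
    (𝓝[≠] z₀) (𝓝 d)

/-- `w_e` is `(F_e,G_e)`-pseudoanalytic (in the sense of Bers) on `D`. -/
def BersPseudoanalyticOn (Fe Ge we : ℂ → ℂ) (D : Set ℂ) : Prop :=
  ∀ z ∈ D, ∃ d, HasBersDerivAt Fe Ge we d z

/-- `∂_z̄ = ½(∂ₓ + i ∂_y)` for functions `ℂ(i₁) → ℂ(i₁)`. -/
def dzbarC (g : ℂ → ℂ) (z : ℂ) : ℂ :=
  (deriv (fun t : ℝ => g (z + t)) 0 + Complex.I * deriv (fun t : ℝ => g (z + t * Complex.I)) 0) / 2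

/-- The Bers characteristic coefficient `a_{(F_e,G_e)}`. -/
def aBers (Fe Ge : ℂ → ℂ) (z : ℂ) : ℂ :=
  -(((starRingEnd ℂ) (Fe z) * dzbarC Ge z - dzbarC Fe z * (starRingEnd ℂ) (Ge z)) /
    (Fe z * (starRingEnd ℂ) (Ge z) - (starRingEnd ℂ) (Fe z) * Ge z))

/-- The Bers characteristic coefficient `b_{(F_e,G_e)}`. -/
def bBers (Fe Ge : ℂ → ℂ) (z : ℂ) : ℂ :=
  (Fe z * dzbarC Ge z - dzbarC Fe z * Ge z) /
    (Fe z * (starRingEnd ℂ) (Ge z) - (starRingEnd ℂ) (Fe z) * Ge z)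

/-- `(F, G)` is the `i₂e`-generating pair associated to complex generating pairs
`(F_{e1}, G_{e1})` on `D₁` and `(F_{e2}, G_{e2})` on `D₂`. -/
def I2eGenPair (Fe1 Ge1 Fe2 Ge2 : ℂ → ℂ) (D₁ D₂ : Set ℂ)
    (F G : Bicomplex → Bicomplex) : Prop :=
  ComplexGenPair Fe1 Ge1 D₁ ∧ ComplexGenPair Fe2 Ge2 D₂ ∧
  (∀ w, F w = ofComplex (Fe1 (P1 w)) * e1 + ofComplex (Fe2 (P2 w)) * e2) ∧
  (∀ w, G w = ofComplex (Ge1 (P1 w)) * e1 + ofComplex (Ge2 (P2 w)) * e2)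

end Bicomplex

open Bicomplex

namespace BCAux
open Bicomplex

lemma continuous_toProd : Continuous toProd := continuous_induced_dom

lemma continuous_ofProd : Continuous ofProd :=
  continuous_induced_rng.mpr continuous_id

lemma line_eq (w e : Bicomplex) (t : ℝ) :
    toProd (w + Bicomplex.ofReal t * e) = toProd w + t • toProd e := by
  show ((w + Bicomplex.ofReal t * e).z1, (w + Bicomplex.ofReal t * e).z2) = _
  rw [Prod.ext_iff]
  constructor <;> simp [toProd, Bicomplex.ofReal, Complex.real_smul]

lemma continuous_line (w e : Bicomplex) :
    Continuous fun t : ℝ => w + Bicomplex.ofReal t * e := by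
  apply continuous_induced_rng.mpr
  have h : (toProd ∘ fun t : ℝ => w + Bicomplex.ofReal t * e) = fun t : ℝ => toProd w + t • toProd e :=
    funext (line_eq w e)
  rw [h]
  fun_prop

lemma pd_congr {g g' : Bicomplex → ℂ} {w : Bicomplex} (h : g =ᶠ[nhds w] g')
    (e : Bicomplex) : pd e g w = pd e g' w := by
  apply Filter.EventuallyEq.deriv_eq
  have hc : Filter.Tendsto (fun t : ℝ => w + Bicomplex.ofReal t * e) (nhds 0) (nhds w) := by
    have h0 : w + Bicomplex.ofReal (0 : ℝ) * e = w := by ext <;> simp [Bicomplex.ofReal]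
    have := (continuous_line w e).tendsto 0
    rwa [h0] at this
  exact h.comp_tendsto hc

lemma pd_eq {G : ℂ × ℂ → ℂ} {w : Bicomplex} (hG : DifferentiableAt ℝ G (toProd w))
    (e : Bicomplex) :
    pd e (fun x => G (toProd x)) w = fderiv ℝ G (toProd w) (toProd e) := by
  have hline : HasDerivAt (fun t : ℝ => toProd w + t • toProd e) (toProd e) 0 := by
    simpa using (((hasDerivAt_id (0 : ℝ)).smul_const (toProd e)).const_add (toProd w))
  have hG' : HasFDerivAt G (fderiv ℝ G (toProd w)) (toProd w + (0 : ℝ) • toProd e) := by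
    simpa using hG.hasFDerivAt
  have h2 : HasDerivAt (fun t : ℝ => G (toProd w + t • toProd e))
      (fderiv ℝ G (toProd w) (toProd e)) 0 := by
    exact hG'.comp_hasDerivAt (x := (0:ℝ)) hline
  have hfun : (fun t : ℝ => G (toProd (w + Bicomplex.ofReal t * e)))
      = fun t : ℝ => G (toProd w + t • toProd e) := by
    funext t; rw [line_eq]
  unfold pd
  rw [show (fun t : ℝ => (fun x => G (toProd x)) (w + Bicomplex.ofReal t * e))
      = fun t : ℝ => G (toProd w + t • toProd e) from hfun]
  exact h2.deriv

lemma pd_zero (e : Bicomplex) (w : Bicomplex) : pd e (fun _ => (0 : ℂ)) w = 0 := by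
  unfold pd; simp

def Dd (v : ℂ × ℂ) (G : ℂ × ℂ → ℂ) (q : ℂ × ℂ) : ℂ := fderiv ℝ G q v

def e1' : ℂ × ℂ := (1, 0)
def e2' : ℂ × ℂ := (Complex.I, 0)
def e3' : ℂ × ℂ := (0, 1)
def e4' : ℂ × ℂ := (0, Complex.I)

def dd1 (G : ℂ × ℂ → ℂ) (q : ℂ × ℂ) : ℂ := (Dd e1' G q - Complex.I * Dd e2' G q) / 2
def dd2 (G : ℂ × ℂ → ℂ) (q : ℂ × ℂ) : ℂ := (Dd e3' G q - Complex.I * Dd e4' G q) / 2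

lemma toProd_one : toProd 1 = e1' := rfl
lemma toProd_i1 : toProd i1 = e2' := rfl
lemma toProd_i2 : toProd i2 = e3' := rfl
lemma toProd_jj : toProd jj = e4' := rfl

lemma dz1_eq {G : ℂ × ℂ → ℂ} {w : Bicomplex} (hG : DifferentiableAt ℝ G (toProd w)) :
    dz1 (fun x => G (toProd x)) w = dd1 G (toProd w) := by
  unfold dz1 dd1 Dd
  rw [pd_eq hG 1, pd_eq hG i1, toProd_one, toProd_i1]

lemma dz2_eq {G : ℂ × ℂ → ℂ} {w : Bicomplex} (hG : DifferentiableAt ℝ G (toProd w)) :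
    dz2 (fun x => G (toProd x)) w = dd2 G (toProd w) := by
  unfold dz2 dd2 Dd
  rw [pd_eq hG i2, pd_eq hG jj, toProd_i2, toProd_jj]

lemma dz1_congr {g g' : Bicomplex → ℂ} {w : Bicomplex} (h : g =ᶠ[nhds w] g') :
    dz1 g w = dz1 g' w := by
  unfold dz1; rw [pd_congr h 1, pd_congr h i1]

lemma dz2_congr {g g' : Bicomplex → ℂ} {w : Bicomplex} (h : g =ᶠ[nhds w] g') :
    dz2 g w = dz2 g' w := by
  unfold dz2; rw [pd_congr h i2, pd_congr h jj]

lemma diff_fderiv {G : ℂ × ℂ → ℂ} {p : ℂ × ℂ} (hG : ContDiffAt ℝ 2 G p) :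
    DifferentiableAt ℝ (fderiv ℝ G) p :=
  (hG.fderiv_right (m := 1) (by norm_num)).differentiableAt (by norm_num)

lemma diff_Dd {G : ℂ × ℂ → ℂ} {p : ℂ × ℂ} (hG : ContDiffAt ℝ 2 G p) (v : ℂ × ℂ) :
    DifferentiableAt ℝ (Dd v G) p :=
  (diff_fderiv hG).clm_apply (differentiableAt_const v)

lemma diff_dd1 {G : ℂ × ℂ → ℂ} {p : ℂ × ℂ} (hG : ContDiffAt ℝ 2 G p) :
    DifferentiableAt ℝ (dd1 G) p := by
  unfold dd1
  have h : DifferentiableAt ℝ (fun q => Dd e1' G q - Complex.I * Dd e2' G q) p :=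
    (diff_Dd hG e1').sub ((diff_Dd hG e2').const_mul Complex.I)
  simpa [div_eq_mul_inv] using h.mul_const ((2:ℂ)⁻¹)

lemma diff_dd2 {G : ℂ × ℂ → ℂ} {p : ℂ × ℂ} (hG : ContDiffAt ℝ 2 G p) :
    DifferentiableAt ℝ (dd2 G) p := by
  unfold dd2
  have h : DifferentiableAt ℝ (fun q => Dd e3' G q - Complex.I * Dd e4' G q) p :=
    (diff_Dd hG e3').sub ((diff_Dd hG e4').const_mul Complex.I)
  simpa [div_eq_mul_inv] using h.mul_const ((2:ℂ)⁻¹)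

lemma Dd_congr {A B : ℂ × ℂ → ℂ} {p : ℂ × ℂ} (h : A =ᶠ[nhds p] B) (v : ℂ × ℂ) :
    Dd v A p = Dd v B p := by
  unfold Dd; rw [h.fderiv_eq]

lemma Dd_sub {A B : ℂ × ℂ → ℂ} {p : ℂ × ℂ} (hA : DifferentiableAt ℝ A p)
    (hB : DifferentiableAt ℝ B p) (v : ℂ × ℂ) :
    Dd v (fun q => A q - B q) p = Dd v A p - Dd v B p := by
  unfold Dd; rw [fderiv_fun_sub hA hB]; rfl

lemma Dd_add {A B : ℂ × ℂ → ℂ} {p : ℂ × ℂ} (hA : DifferentiableAt ℝ A p)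
    (hB : DifferentiableAt ℝ B p) (v : ℂ × ℂ) :
    Dd v (fun q => A q + B q) p = Dd v A p + Dd v B p := by
  unfold Dd; rw [fderiv_fun_add hA hB]; rfl

lemma Dd_const_mul {A : ℂ × ℂ → ℂ} {p : ℂ × ℂ} (hA : DifferentiableAt ℝ A p)
    (c : ℂ) (v : ℂ × ℂ) :
    Dd v (fun q => c * A q) p = c * Dd v A p := by
  unfold Dd
  have : (fun q => c * A q) = fun q => c • A q := by funext q; rw [smul_eq_mul]
  rw [this, fderiv_fun_const_smul hA c]
  simp

lemma Dd_div_const {A : ℂ × ℂ → ℂ} {p : ℂ × ℂ} (hA : DifferentiableAt ℝ A p)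
    (c : ℂ) (v : ℂ × ℂ) :
    Dd v (fun q => A q / c) p = Dd v A p / c := by
  have h2 : (fun q => A q / c) = fun q => c⁻¹ * A q := by funext q; rw [div_eq_inv_mul]
  rw [h2, Dd_const_mul hA]
  field_simp

lemma Dd_mul {A B : ℂ × ℂ → ℂ} {p : ℂ × ℂ} (hA : DifferentiableAt ℝ A p)
    (hB : DifferentiableAt ℝ B p) (v : ℂ × ℂ) :
    Dd v (fun q => A q * B q) p = Dd v A p * B p + A p * Dd v B p := by
  unfold Dd; rw [fderiv_fun_mul hA hB]; simp [smul_eq_mul]; ring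

lemma Dd_Dd {G : ℂ × ℂ → ℂ} {p : ℂ × ℂ} (hG : ContDiffAt ℝ 2 G p) (a b : ℂ × ℂ) :
    Dd b (Dd a G) p = fderiv ℝ (fderiv ℝ G) p b a := by
  unfold Dd
  rw [fderiv_clm_apply (diff_fderiv hG) (differentiableAt_const a)]
  simp

lemma Dd_symm {G : ℂ × ℂ → ℂ} {p : ℂ × ℂ} (hG : ContDiffAt ℝ 2 G p) (a b : ℂ × ℂ) :
    Dd b (Dd a G) p = Dd a (Dd b G) p := by
  rw [Dd_Dd hG, Dd_Dd hG]
  exact hG.isSymmSndFDerivAt (by norm_num) b a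

lemma Dd_dd1 {G : ℂ × ℂ → ℂ} {p : ℂ × ℂ} (hG : ContDiffAt ℝ 2 G p) (v : ℂ × ℂ) :
    Dd v (dd1 G) p = (Dd v (Dd e1' G) p - Complex.I * Dd v (Dd e2' G) p) / 2 := by
  unfold dd1
  rw [Dd_div_const (A := fun q => Dd e1' G q - Complex.I * Dd e2' G q) ((diff_Dd hG e1').sub ((diff_Dd hG e2').const_mul _)) (2:ℂ),
    Dd_sub (diff_Dd hG e1') ((diff_Dd hG e2').const_mul _),
    Dd_const_mul (diff_Dd hG e2')]

lemma Dd_dd2 {G : ℂ × ℂ → ℂ} {p : ℂ × ℂ} (hG : ContDiffAt ℝ 2 G p) (v : ℂ × ℂ) :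
    Dd v (dd2 G) p = (Dd v (Dd e3' G) p - Complex.I * Dd v (Dd e4' G) p) / 2 := by
  unfold dd2
  rw [Dd_div_const (A := fun q => Dd e3' G q - Complex.I * Dd e4' G q) ((diff_Dd hG e3').sub ((diff_Dd hG e4').const_mul _)) (2:ℂ),
    Dd_sub (diff_Dd hG e3') ((diff_Dd hG e4').const_mul _),
    Dd_const_mul (diff_Dd hG e4')]


lemma Dd_neg {A : ℂ × ℂ → ℂ} {p : ℂ × ℂ} (v : ℂ × ℂ) :
    Dd v (fun q => -A q) p = -Dd v A p := by
  unfold Dd; rw [fderiv_fun_neg]; simp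

lemma dd1_apply (G : ℂ × ℂ → ℂ) (q : ℂ × ℂ) :
    dd1 G q = (Dd e1' G q - Complex.I * Dd e2' G q) / 2 := rfl

lemma dd2_apply (G : ℂ × ℂ → ℂ) (q : ℂ × ℂ) :
    dd2 G q = (Dd e3' G q - Complex.I * Dd e4' G q) / 2 := rfl

lemma dz1_zero (w : Bicomplex) : dz1 (fun _ => (0 : ℂ)) w = 0 := by
  unfold dz1; rw [pd_zero, pd_zero]; simp

lemma dz2_zero (w : Bicomplex) : dz2 (fun _ => (0 : ℂ)) w = 0 := by
  unfold dz2; rw [pd_zero, pd_zero]; simp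

lemma sub_z1 (a b : Bicomplex) : (a - b).z1 = a.z1 - b.z1 := by
  rw [sub_eq_add_neg, Bicomplex.add_z1, Bicomplex.neg_z1, ← sub_eq_add_neg]

lemma sub_z2 (a b : Bicomplex) : (a - b).z2 = a.z2 - b.z2 := by
  rw [sub_eq_add_neg, Bicomplex.add_z2, Bicomplex.neg_z2, ← sub_eq_add_neg]

lemma dag2_z1 (a : Bicomplex) : (dag2 a).z1 = a.z1 := rfl
lemma dag2_z2 (a : Bicomplex) : (dag2 a).z2 = -a.z2 := rfl

lemma ofComplex_z1 (c : ℂ) : (ofComplex c).z1 = c := rfl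
lemma ofComplex_z2 (c : ℂ) : (ofComplex c).z2 = 0 := rfl

lemma dOm_z1 (f : Bicomplex → Bicomplex) (w : Bicomplex) :
    (dOm f w).z1 = (dz1 (s1 f) w + dz2 (s2 f) w) / 2 := by
  simp [dOm, dZ1, dZ2, i2, ofComplex, sub_z1, sub_z2, Bicomplex.mul_z1, Bicomplex.mul_z2]
  ring

lemma dOm_z2 (f : Bicomplex → Bicomplex) (w : Bicomplex) :
    (dOm f w).z2 = (dz1 (s2 f) w - dz2 (s1 f) w) / 2 := by
  simp [dOm, dZ1, dZ2, i2, ofComplex, sub_z1, sub_z2, Bicomplex.mul_z1, Bicomplex.mul_z2]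
  ring

lemma dOmBar_z1 (f : Bicomplex → Bicomplex) (w : Bicomplex) :
    (dOmBar f w).z1 = (dz1 (s1 f) w - dz2 (s2 f) w) / 2 := by
  simp [dOmBar, dZ1, dZ2, i2, ofComplex, Bicomplex.mul_z1, Bicomplex.mul_z2,
    Bicomplex.add_z1, Bicomplex.add_z2]
  ring

lemma dOmBar_z2 (f : Bicomplex → Bicomplex) (w : Bicomplex) :
    (dOmBar f w).z2 = (dz1 (s2 f) w + dz2 (s1 f) w) / 2 := by
  simp [dOmBar, dZ1, dZ2, i2, ofComplex, Bicomplex.mul_z1, Bicomplex.mul_z2,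
    Bicomplex.add_z1, Bicomplex.add_z2]
  ring

/-- First `ℂ(i₁)`-component as a function on `ℂ × ℂ`. -/
def c1 (f : Bicomplex → Bicomplex) : ℂ × ℂ → ℂ := fun q => (f (ofProd q)).z1

/-- Second `ℂ(i₁)`-component as a function on `ℂ × ℂ`. -/
def c2 (f : Bicomplex → Bicomplex) : ℂ × ℂ → ℂ := fun q => (f (ofProd q)).z2

lemma c1_contDiffOn {f : Bicomplex → Bicomplex} {U : Set Bicomplex}
    (hf : TContDiffOn 2 f U) : ContDiffOn ℝ 2 (c1 f) (toProd '' U) :=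
  contDiff_fst.comp_contDiffOn hf

lemma c2_contDiffOn {f : Bicomplex → Bicomplex} {U : Set Bicomplex}
    (hf : TContDiffOn 2 f U) : ContDiffOn ℝ 2 (c2 f) (toProd '' U) :=
  contDiff_snd.comp_contDiffOn hf

lemma c1_apply (f : Bicomplex → Bicomplex) (x : Bicomplex) : (f x).z1 = c1 f (toProd x) := rfl
lemma c2_apply (f : Bicomplex → Bicomplex) (x : Bicomplex) : (f x).z2 = c2 f (toProd x) := rfl

lemma Dd_rhs_add {A B Cf Df : ℂ × ℂ → ℂ} {p : ℂ × ℂ}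
    (hA : DifferentiableAt ℝ A p) (hB : DifferentiableAt ℝ B p)
    (hC : DifferentiableAt ℝ Cf p) (hD : DifferentiableAt ℝ Df p) (v : ℂ × ℂ) :
    Dd v (fun q => 2 * (A q * B q + Cf q * Df q)) p
      = 2 * (Dd v A p * B p + A p * Dd v B p + Dd v Cf p * Df p + Cf p * Dd v Df p) := by
  rw [Dd_const_mul (A := fun q => A q * B q + Cf q * Df q) ((hA.mul hB).add (hC.mul hD)), Dd_add (A := fun q => A q * B q) (B := fun q => Cf q * Df q) (hA.mul hB) (hC.mul hD),
    Dd_mul hA hB, Dd_mul hC hD]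
  ring

lemma Dd_rhs_sub {A B Cf Df : ℂ × ℂ → ℂ} {p : ℂ × ℂ}
    (hA : DifferentiableAt ℝ A p) (hB : DifferentiableAt ℝ B p)
    (hC : DifferentiableAt ℝ Cf p) (hD : DifferentiableAt ℝ Df p) (v : ℂ × ℂ) :
    Dd v (fun q => 2 * (A q * B q - Cf q * Df q)) p
      = 2 * (Dd v A p * B p + A p * Dd v B p - Dd v Cf p * Df p - Cf p * Dd v Df p) := by
  rw [Dd_const_mul (A := fun q => A q * B q - Cf q * Df q) ((hA.mul hB).sub (hC.mul hD)), Dd_sub (A := fun q => A q * B q) (B := fun q => Cf q * Df q) (hA.mul hB) (hC.mul hD),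
    Dd_mul hA hB, Dd_mul hC hD]
  ring

end BCAux

set_option maxHeartbeats 2000000

open BCAux

/-- If `b : Ω → 𝕋` has `ℂ(i₁)`-valued `b_ω` and `W = u + i₂v` solves
`W_{ω†₂} = bW†₂` on `Ω`, then `u` solves `∂_{ω†₂}∂_ω u - (|b|²_{i₁} + b_ω)u = 0` and `v`
solves `∂_{ω†₂}∂_ω v - (|b|²_{i₁} - b_ω)v = 0` on `Ω`. -/
theorem scalar_vector_parts_solve_schrodinger (Ω : Set Bicomplex) (hΩ : IsOpen Ω)
    (b W : Bicomplex → Bicomplex)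
    (hb : TContDiffOn 2 b Ω) (hW : TContDiffOn 2 W Ω)
    (hbC : ∀ w ∈ Ω, (dOm b w).z2 = 0)
    (heq : ∀ w ∈ Ω, dOmBar W w = b w * dag2 (W w)) :
    (∀ w ∈ Ω,
      dOmBar (fun v => dOm (fun u => ofComplex ((W u).z1)) v) w -
        ofComplex (((b w * dag2 (b w)).z1 + (dOm b w).z1) * (W w).z1) = 0) ∧
    (∀ w ∈ Ω,
      dOmBar (fun v => dOm (fun u => ofComplex ((W u).z2)) v) w -
        ofComplex (((b w * dag2 (b w)).z1 - (dOm b w).z1) * (W w).z2) = 0) := by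
  have key : ∀ w ∈ Ω,
      (dOmBar (fun v => dOm (fun u => ofComplex ((W u).z1)) v) w -
          ofComplex (((b w * dag2 (b w)).z1 + (dOm b w).z1) * (W w).z1) = 0) ∧
      (dOmBar (fun v => dOm (fun u => ofComplex ((W u).z2)) v) w -
          ofComplex (((b w * dag2 (b w)).z1 - (dOm b w).z1) * (W w).z2) = 0) := by
    intro w hw
    have hUopen : IsOpen (toProd '' Ω) := by
      have hUeq : toProd '' Ω = ofProd ⁻¹' Ω := by
        ext q
        constructor
        · rintro ⟨x, hx, rfl⟩; exact hx
        · intro hq; exact ⟨ofProd q, hq, rfl⟩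
      rw [hUeq]; exact hΩ.preimage continuous_ofProd
    have hGuC := c1_contDiffOn hW
    have hGvC := c2_contDiffOn hW
    have hBuC := c1_contDiffOn hb
    have hBvC := c2_contDiffOn hb
    have hAt : ∀ g : ℂ × ℂ → ℂ, ContDiffOn ℝ 2 g (toProd '' Ω) →
        ∀ x ∈ Ω, ContDiffAt ℝ 2 g (toProd x) := fun g hg x hx =>
      hg.contDiffAt (hUopen.mem_nhds ⟨x, hx, rfl⟩)
    have hDf : ∀ g : ℂ × ℂ → ℂ, ContDiffOn ℝ 2 g (toProd '' Ω) →
        ∀ x ∈ Ω, DifferentiableAt ℝ g (toProd x) := fun g hg x hx =>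
      (hAt g hg x hx).differentiableAt (by norm_num)
    have hGuA := hAt _ hGuC w hw
    have hGvA := hAt _ hGvC w hw
    -- first order equations on Ω
    have hE1 : ∀ x ∈ Ω, dd1 (c1 W) (toProd x) - dd2 (c2 W) (toProd x)
        = 2 * (c1 b (toProd x) * c1 W (toProd x) + c2 b (toProd x) * c2 W (toProd x)) := by
      intro x hx
      have h := congrArg Bicomplex.z1 (heq x hx)
      rw [dOmBar_z1] at h
      have r1 : dz1 (s1 W) x = dd1 (c1 W) (toProd x) := dz1_eq (hDf _ hGuC x hx)
      have r2 : dz2 (s2 W) x = dd2 (c2 W) (toProd x) := dz2_eq (hDf _ hGvC x hx)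
      rw [r1, r2] at h
      simp only [Bicomplex.mul_z1, dag2_z1, dag2_z2] at h
      rw [c1_apply b x, c1_apply W x, c2_apply b x, c2_apply W x] at h
      linear_combination 2 * h
    have hE2 : ∀ x ∈ Ω, dd1 (c2 W) (toProd x) + dd2 (c1 W) (toProd x)
        = 2 * (c2 b (toProd x) * c1 W (toProd x) - c1 b (toProd x) * c2 W (toProd x)) := by
      intro x hx
      have h := congrArg Bicomplex.z2 (heq x hx)
      rw [dOmBar_z2] at h
      have r1 : dz1 (s2 W) x = dd1 (c2 W) (toProd x) := dz1_eq (hDf _ hGvC x hx)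
      have r2 : dz2 (s1 W) x = dd2 (c1 W) (toProd x) := dz2_eq (hDf _ hGuC x hx)
      rw [r1, r2] at h
      simp only [Bicomplex.mul_z2, dag2_z1, dag2_z2] at h
      rw [c1_apply b x, c1_apply W x, c2_apply b x, c2_apply W x] at h
      linear_combination 2 * h
    -- the condition on b at w
    have hbCw : (Dd e1' (c2 b) (toProd w) - Complex.I * Dd e2' (c2 b) (toProd w)) / 2
        - (Dd e3' (c1 b) (toProd w) - Complex.I * Dd e4' (c1 b) (toProd w)) / 2 = 0 := by
      have h := hbC w hw
      rw [dOm_z2] at h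
      have r1 : dz1 (s2 b) w = dd1 (c2 b) (toProd w) := dz1_eq (hDf _ hBvC w hw)
      have r2 : dz2 (s1 b) w = dd2 (c1 b) (toProd w) := dz2_eq (hDf _ hBuC w hw)
      rw [r1, r2, dd1_apply, dd2_apply] at h
      linear_combination 2 * h
    -- pointwise equations at w, expanded
    have hE1w := hE1 w hw
    rw [dd1_apply, dd2_apply] at hE1w
    have hE2w := hE2 w hw
    rw [dd1_apply, dd2_apply] at hE2w
    -- differentiated equations at w
    have hmem : toProd '' Ω ∈ nhds (toProd w) := hUopen.mem_nhds ⟨w, hw, rfl⟩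
    have hOm : Ω ∈ nhds w := hΩ.mem_nhds hw
    have hfun1 : (fun q => dd1 (c1 W) q - dd2 (c2 W) q) =ᶠ[nhds (toProd w)]
        (fun q => 2 * (c1 b q * c1 W q + c2 b q * c2 W q)) := by
      filter_upwards [hmem]
      rintro q ⟨x, hx, rfl⟩
      exact hE1 x hx
    have hfun2 : (fun q => dd1 (c2 W) q + dd2 (c1 W) q) =ᶠ[nhds (toProd w)]
        (fun q => 2 * (c2 b q * c1 W q - c1 b q * c2 W q)) := by
      filter_upwards [hmem]
      rintro q ⟨x, hx, rfl⟩
      exact hE2 x hx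
    have hE1d : ∀ v : ℂ × ℂ,
        (Dd v (Dd e1' (c1 W)) (toProd w) - Complex.I * Dd v (Dd e2' (c1 W)) (toProd w)) / 2
          - (Dd v (Dd e3' (c2 W)) (toProd w) - Complex.I * Dd v (Dd e4' (c2 W)) (toProd w)) / 2
        = 2 * (Dd v (c1 b) (toProd w) * c1 W (toProd w)
            + c1 b (toProd w) * Dd v (c1 W) (toProd w)
            + Dd v (c2 b) (toProd w) * c2 W (toProd w)
            + c2 b (toProd w) * Dd v (c2 W) (toProd w)) := by
      intro v
      have h0 := Dd_congr hfun1 v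
      rw [Dd_sub (diff_dd1 hGuA) (diff_dd2 hGvA), Dd_dd1 hGuA, Dd_dd2 hGvA,
        Dd_rhs_add (hDf _ hBuC w hw) (hDf _ hGuC w hw) (hDf _ hBvC w hw)
          (hDf _ hGvC w hw)] at h0
      exact h0
    have hE2d : ∀ v : ℂ × ℂ,
        (Dd v (Dd e1' (c2 W)) (toProd w) - Complex.I * Dd v (Dd e2' (c2 W)) (toProd w)) / 2
          + (Dd v (Dd e3' (c1 W)) (toProd w) - Complex.I * Dd v (Dd e4' (c1 W)) (toProd w)) / 2
        = 2 * (Dd v (c2 b) (toProd w) * c1 W (toProd w)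
            + c2 b (toProd w) * Dd v (c1 W) (toProd w)
            - Dd v (c1 b) (toProd w) * c2 W (toProd w)
            - c1 b (toProd w) * Dd v (c2 W) (toProd w)) := by
      intro v
      have h0 := Dd_congr hfun2 v
      rw [Dd_add (diff_dd1 hGvA) (diff_dd2 hGuA), Dd_dd1 hGvA, Dd_dd2 hGuA,
        Dd_rhs_sub (hDf _ hBvC w hw) (hDf _ hGuC w hw) (hDf _ hBuC w hw)
          (hDf _ hGvC w hw)] at h0
      exact h0
    have hsymu : ∀ a b' : ℂ × ℂ, Dd b' (Dd a (c1 W)) (toProd w) = Dd a (Dd b' (c1 W)) (toProd w) :=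
      fun a b' => Dd_symm hGuA a b'
    have hsymv : ∀ a b' : ℂ × ℂ, Dd b' (Dd a (c2 W)) (toProd w) = Dd a (Dd b' (c2 W)) (toProd w) :=
      fun a b' => Dd_symm hGvA a b'
    -- the coefficient reductions
    have hbb : (b w * dag2 (b w)).z1
        = c1 b (toProd w) * c1 b (toProd w) + c2 b (toProd w) * c2 b (toProd w) := by
      simp only [Bicomplex.mul_z1, dag2_z1, dag2_z2]
      rw [c1_apply b w, c2_apply b w]
      ring
    have hdomb : (dOm b w).z1
        = ((Dd e1' (c1 b) (toProd w) - Complex.I * Dd e2' (c1 b) (toProd w)) / 2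
          + (Dd e3' (c2 b) (toProd w) - Complex.I * Dd e4' (c2 b) (toProd w)) / 2) / 2 := by
      rw [dOm_z1]
      have r1 : dz1 (s1 b) w = dd1 (c1 b) (toProd w) := dz1_eq (hDf _ hBuC w hw)
      have r2 : dz2 (s2 b) w = dd2 (c2 b) (toProd w) := dz2_eq (hDf _ hBvC w hw)
      rw [r1, r2, dd1_apply, dd2_apply]
    -- inner reductions (u part)
    have hin11 : ∀ y ∈ Ω, s1 (fun v => dOm (fun u => ofComplex ((W u).z1)) v) y
        = dd1 (c1 W) (toProd y) / 2 := by
      intro y hy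
      show (dOm (fun u => ofComplex ((W u).z1)) y).z1 = _
      rw [dOm_z1]
      have h0 : dz2 (s2 fun u => ofComplex ((W u).z1)) y = 0 := dz2_zero y
      have h1 : dz1 (s1 fun u => ofComplex ((W u).z1)) y = dd1 (c1 W) (toProd y) :=
        dz1_eq (hDf _ hGuC y hy)
      rw [h0, h1, add_zero]
    have hin12 : ∀ y ∈ Ω, s2 (fun v => dOm (fun u => ofComplex ((W u).z1)) v) y
        = (-dd2 (c1 W) (toProd y)) / 2 := by
      intro y hy
      show (dOm (fun u => ofComplex ((W u).z1)) y).z2 = _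
      rw [dOm_z2]
      have h0 : dz1 (s2 fun u => ofComplex ((W u).z1)) y = 0 := dz1_zero y
      have h1 : dz2 (s1 fun u => ofComplex ((W u).z1)) y = dd2 (c1 W) (toProd y) :=
        dz2_eq (hDf _ hGuC y hy)
      rw [h0, h1, zero_sub]
    -- inner reductions (v part)
    have hin21 : ∀ y ∈ Ω, s1 (fun v => dOm (fun u => ofComplex ((W u).z2)) v) y
        = dd1 (c2 W) (toProd y) / 2 := by
      intro y hy
      show (dOm (fun u => ofComplex ((W u).z2)) y).z1 = _
      rw [dOm_z1]
      have h0 : dz2 (s2 fun u => ofComplex ((W u).z2)) y = 0 := dz2_zero y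
      have h1 : dz1 (s1 fun u => ofComplex ((W u).z2)) y = dd1 (c2 W) (toProd y) :=
        dz1_eq (hDf _ hGvC y hy)
      rw [h0, h1, add_zero]
    have hin22 : ∀ y ∈ Ω, s2 (fun v => dOm (fun u => ofComplex ((W u).z2)) v) y
        = (-dd2 (c2 W) (toProd y)) / 2 := by
      intro y hy
      show (dOm (fun u => ofComplex ((W u).z2)) y).z2 = _
      rw [dOm_z2]
      have h0 : dz1 (s2 fun u => ofComplex ((W u).z2)) y = 0 := dz1_zero y
      have h1 : dz2 (s1 fun u => ofComplex ((W u).z2)) y = dd2 (c2 W) (toProd y) :=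
        dz2_eq (hDf _ hGvC y hy)
      rw [h0, h1, zero_sub]
    -- differentiability of the half-derivative functions
    have hdH1u : DifferentiableAt ℝ (fun q => dd1 (c1 W) q / 2) (toProd w) := by
      simpa [div_eq_mul_inv] using (diff_dd1 hGuA).mul_const ((2:ℂ)⁻¹)
    have hdH2u : DifferentiableAt ℝ (fun q => (-dd2 (c1 W) q) / 2) (toProd w) := by
      simpa [div_eq_mul_inv] using ((diff_dd2 hGuA).neg).mul_const ((2:ℂ)⁻¹)
    have hdH1v : DifferentiableAt ℝ (fun q => dd1 (c2 W) q / 2) (toProd w) := by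
      simpa [div_eq_mul_inv] using (diff_dd1 hGvA).mul_const ((2:ℂ)⁻¹)
    have hdH2v : DifferentiableAt ℝ (fun q => (-dd2 (c2 W) q) / 2) (toProd w) := by
      simpa [div_eq_mul_inv] using ((diff_dd2 hGvA).neg).mul_const ((2:ℂ)⁻¹)
    -- outer reductions (u part)
    have hA11 : dz1 (s1 (fun v => dOm (fun u => ofComplex ((W u).z1)) v)) w
        = ((Dd e1' (Dd e1' (c1 W)) (toProd w)
              - Complex.I * Dd e1' (Dd e2' (c1 W)) (toProd w)) / 2 / 2
          - Complex.I * ((Dd e2' (Dd e1' (c1 W)) (toProd w)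
              - Complex.I * Dd e2' (Dd e2' (c1 W)) (toProd w)) / 2 / 2)) / 2 := by
      have hcg : s1 (fun v => dOm (fun u => ofComplex ((W u).z1)) v)
          =ᶠ[nhds w] (fun y => dd1 (c1 W) (toProd y) / 2) := by
        filter_upwards [hOm] with y hy using hin11 y hy
      have st := (dz1_congr hcg).trans (dz1_eq hdH1u)
      rw [dd1_apply, Dd_div_const (diff_dd1 hGuA) 2 e1', Dd_div_const (diff_dd1 hGuA) 2 e2',
        Dd_dd1 hGuA e1', Dd_dd1 hGuA e2'] at st
      exact st
    have hA12 : dz2 (s2 (fun v => dOm (fun u => ofComplex ((W u).z1)) v)) w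
        = (-((Dd e3' (Dd e3' (c1 W)) (toProd w)
              - Complex.I * Dd e3' (Dd e4' (c1 W)) (toProd w)) / 2) / 2
          - Complex.I * (-((Dd e4' (Dd e3' (c1 W)) (toProd w)
              - Complex.I * Dd e4' (Dd e4' (c1 W)) (toProd w)) / 2) / 2)) / 2 := by
      have hcg : s2 (fun v => dOm (fun u => ofComplex ((W u).z1)) v)
          =ᶠ[nhds w] (fun y => (-dd2 (c1 W) (toProd y)) / 2) := by
        filter_upwards [hOm] with y hy using hin12 y hy
      have st := (dz2_congr hcg).trans (dz2_eq hdH2u)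
      rw [dd2_apply, Dd_div_const (A := fun q => -dd2 (c1 W) q) ((diff_dd2 hGuA).neg) 2 e3',
        Dd_div_const (A := fun q => -dd2 (c1 W) q) ((diff_dd2 hGuA).neg) 2 e4', Dd_neg e3', Dd_neg e4',
        Dd_dd2 hGuA e3', Dd_dd2 hGuA e4'] at st
      exact st
    have hA21 : dz1 (s2 (fun v => dOm (fun u => ofComplex ((W u).z1)) v)) w
        = (-((Dd e1' (Dd e3' (c1 W)) (toProd w)
              - Complex.I * Dd e1' (Dd e4' (c1 W)) (toProd w)) / 2) / 2
          - Complex.I * (-((Dd e2' (Dd e3' (c1 W)) (toProd w)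
              - Complex.I * Dd e2' (Dd e4' (c1 W)) (toProd w)) / 2) / 2)) / 2 := by
      have hcg : s2 (fun v => dOm (fun u => ofComplex ((W u).z1)) v)
          =ᶠ[nhds w] (fun y => (-dd2 (c1 W) (toProd y)) / 2) := by
        filter_upwards [hOm] with y hy using hin12 y hy
      have st := (dz1_congr hcg).trans (dz1_eq hdH2u)
      rw [dd1_apply, Dd_div_const (A := fun q => -dd2 (c1 W) q) ((diff_dd2 hGuA).neg) 2 e1',
        Dd_div_const (A := fun q => -dd2 (c1 W) q) ((diff_dd2 hGuA).neg) 2 e2', Dd_neg e1', Dd_neg e2',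
        Dd_dd2 hGuA e1', Dd_dd2 hGuA e2'] at st
      exact st
    have hA22 : dz2 (s1 (fun v => dOm (fun u => ofComplex ((W u).z1)) v)) w
        = ((Dd e3' (Dd e1' (c1 W)) (toProd w)
              - Complex.I * Dd e3' (Dd e2' (c1 W)) (toProd w)) / 2 / 2
          - Complex.I * ((Dd e4' (Dd e1' (c1 W)) (toProd w)
              - Complex.I * Dd e4' (Dd e2' (c1 W)) (toProd w)) / 2 / 2)) / 2 := by
      have hcg : s1 (fun v => dOm (fun u => ofComplex ((W u).z1)) v)
          =ᶠ[nhds w] (fun y => dd1 (c1 W) (toProd y) / 2) := by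
        filter_upwards [hOm] with y hy using hin11 y hy
      have st := (dz2_congr hcg).trans (dz2_eq hdH1u)
      rw [dd2_apply, Dd_div_const (diff_dd1 hGuA) 2 e3', Dd_div_const (diff_dd1 hGuA) 2 e4',
        Dd_dd1 hGuA e3', Dd_dd1 hGuA e4'] at st
      exact st
    -- outer reductions (v part)
    have hB11 : dz1 (s1 (fun v => dOm (fun u => ofComplex ((W u).z2)) v)) w
        = ((Dd e1' (Dd e1' (c2 W)) (toProd w)
              - Complex.I * Dd e1' (Dd e2' (c2 W)) (toProd w)) / 2 / 2
          - Complex.I * ((Dd e2' (Dd e1' (c2 W)) (toProd w)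
              - Complex.I * Dd e2' (Dd e2' (c2 W)) (toProd w)) / 2 / 2)) / 2 := by
      have hcg : s1 (fun v => dOm (fun u => ofComplex ((W u).z2)) v)
          =ᶠ[nhds w] (fun y => dd1 (c2 W) (toProd y) / 2) := by
        filter_upwards [hOm] with y hy using hin21 y hy
      have st := (dz1_congr hcg).trans (dz1_eq hdH1v)
      rw [dd1_apply, Dd_div_const (diff_dd1 hGvA) 2 e1', Dd_div_const (diff_dd1 hGvA) 2 e2',
        Dd_dd1 hGvA e1', Dd_dd1 hGvA e2'] at st
      exact st
    have hB12 : dz2 (s2 (fun v => dOm (fun u => ofComplex ((W u).z2)) v)) w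
        = (-((Dd e3' (Dd e3' (c2 W)) (toProd w)
              - Complex.I * Dd e3' (Dd e4' (c2 W)) (toProd w)) / 2) / 2
          - Complex.I * (-((Dd e4' (Dd e3' (c2 W)) (toProd w)
              - Complex.I * Dd e4' (Dd e4' (c2 W)) (toProd w)) / 2) / 2)) / 2 := by
      have hcg : s2 (fun v => dOm (fun u => ofComplex ((W u).z2)) v)
          =ᶠ[nhds w] (fun y => (-dd2 (c2 W) (toProd y)) / 2) := by
        filter_upwards [hOm] with y hy using hin22 y hy
      have st := (dz2_congr hcg).trans (dz2_eq hdH2v)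
      rw [dd2_apply, Dd_div_const (A := fun q => -dd2 (c2 W) q) ((diff_dd2 hGvA).neg) 2 e3',
        Dd_div_const (A := fun q => -dd2 (c2 W) q) ((diff_dd2 hGvA).neg) 2 e4', Dd_neg e3', Dd_neg e4',
        Dd_dd2 hGvA e3', Dd_dd2 hGvA e4'] at st
      exact st
    have hB21 : dz1 (s2 (fun v => dOm (fun u => ofComplex ((W u).z2)) v)) w
        = (-((Dd e1' (Dd e3' (c2 W)) (toProd w)
              - Complex.I * Dd e1' (Dd e4' (c2 W)) (toProd w)) / 2) / 2
          - Complex.I * (-((Dd e2' (Dd e3' (c2 W)) (toProd w)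
              - Complex.I * Dd e2' (Dd e4' (c2 W)) (toProd w)) / 2) / 2)) / 2 := by
      have hcg : s2 (fun v => dOm (fun u => ofComplex ((W u).z2)) v)
          =ᶠ[nhds w] (fun y => (-dd2 (c2 W) (toProd y)) / 2) := by
        filter_upwards [hOm] with y hy using hin22 y hy
      have st := (dz1_congr hcg).trans (dz1_eq hdH2v)
      rw [dd1_apply, Dd_div_const (A := fun q => -dd2 (c2 W) q) ((diff_dd2 hGvA).neg) 2 e1',
        Dd_div_const (A := fun q => -dd2 (c2 W) q) ((diff_dd2 hGvA).neg) 2 e2', Dd_neg e1', Dd_neg e2',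
        Dd_dd2 hGvA e1', Dd_dd2 hGvA e2'] at st
      exact st
    have hB22 : dz2 (s1 (fun v => dOm (fun u => ofComplex ((W u).z2)) v)) w
        = ((Dd e3' (Dd e1' (c2 W)) (toProd w)
              - Complex.I * Dd e3' (Dd e2' (c2 W)) (toProd w)) / 2 / 2
          - Complex.I * ((Dd e4' (Dd e1' (c2 W)) (toProd w)
              - Complex.I * Dd e4' (Dd e2' (c2 W)) (toProd w)) / 2 / 2)) / 2 := by
      have hcg : s1 (fun v => dOm (fun u => ofComplex ((W u).z2)) v)
          =ᶠ[nhds w] (fun y => dd1 (c2 W) (toProd y) / 2) := by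
        filter_upwards [hOm] with y hy using hin21 y hy
      have st := (dz2_congr hcg).trans (dz2_eq hdH1v)
      rw [dd2_apply, Dd_div_const (diff_dd1 hGvA) 2 e3', Dd_div_const (diff_dd1 hGvA) 2 e4',
        Dd_dd1 hGvA e3', Dd_dd1 hGvA e4'] at st
      exact st
    have hIsq : Complex.I ^ 2 = -1 := Complex.I_sq
    constructor
    · refine Bicomplex.ext ?_ ?_
      · rw [sub_z1, dOmBar_z1, ofComplex_z1, hA11, hA12, hbb, hdomb, c1_apply W w,
          Bicomplex.zero_z1]
        linear_combination (1/8 : ℂ) * hE1d e1' - (Complex.I/8) * hE1d e2'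
          + (1/8 : ℂ) * hE2d e3' - (Complex.I/8) * hE2d e4'
          + (c1 b (toProd w)/2) * hE1w + (c2 b (toProd w)/2) * hE2w
          + (c2 W (toProd w)/2) * hbCw
          - (1/16 : ℂ) * hsymv e1' e3' + (Complex.I/16) * hsymv e1' e4'
          + (Complex.I/16) * hsymv e2' e3' + (1/16 : ℂ) * hsymv e2' e4'
          + ((Dd e2' (Dd e4' (c2 W)) (toProd w) - Dd e4' (Dd e2' (c2 W)) (toProd w)) / 16) * hIsq
      · rw [sub_z2, dOmBar_z2, ofComplex_z2, hA21, hA22, Bicomplex.zero_z2]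
        linear_combination (1/16 : ℂ) * hsymu e1' e3' - (Complex.I/16) * hsymu e1' e4'
          - (Complex.I/16) * hsymu e2' e3' - (1/16 : ℂ) * hsymu e2' e4'
          + ((Dd e4' (Dd e2' (c1 W)) (toProd w) - Dd e2' (Dd e4' (c1 W)) (toProd w)) / 16) * hIsq
    · refine Bicomplex.ext ?_ ?_
      · rw [sub_z1, dOmBar_z1, ofComplex_z1, hB11, hB12, hbb, hdomb, c2_apply W w,
          Bicomplex.zero_z1]
        linear_combination (1/8 : ℂ) * hE2d e1' - (Complex.I/8) * hE2d e2'
          - (1/8 : ℂ) * hE1d e3' + (Complex.I/8) * hE1d e4'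
          + (c2 b (toProd w)/2) * hE1w - (c1 b (toProd w)/2) * hE2w
          + (c1 W (toProd w)/2) * hbCw
          + (1/16 : ℂ) * hsymu e1' e3' - (Complex.I/16) * hsymu e1' e4'
          - (Complex.I/16) * hsymu e2' e3' - (1/16 : ℂ) * hsymu e2' e4'
          + ((Dd e4' (Dd e2' (c1 W)) (toProd w) - Dd e2' (Dd e4' (c1 W)) (toProd w)) / 16) * hIsq
      · rw [sub_z2, dOmBar_z2, ofComplex_z2, hB21, hB22, Bicomplex.zero_z2]
        linear_combination (1/16 : ℂ) * hsymv e1' e3' - (Complex.I/16) * hsymv e1' e4'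
          - (Complex.I/16) * hsymv e2' e3' - (1/16 : ℂ) * hsymv e2' e4'
          + ((Dd e4' (Dd e2' (c2 W)) (toProd w) - Dd e2' (Dd e4' (c2 W)) (toProd w)) / 16) * hIsq
  exact ⟨fun w hw => (key w hw).1, fun w hw => (key w hw).2⟩
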